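/- For every prime p > 3, the Toeplitz graph T_{3p}⟨{3, p}⟩ satisfies ldim_f(T_{3p}⟨{3, p}⟩) = 1. -/

import Mathlib

open Finset

/-- A local resolving function of a graph `G`: a map `ζ : V → [0,1]` such that for every
pair of adjacent vertices `u v`, the sum of `ζ` over the local resolving neighborhood
`R{u,v} = {w : d(w,u) ≠ d(w,v)}` is at least `1`. -/
def IsLocalResolvingFunction {V : Type*} [Fintype V] (G : SimpleGraph V) (ζ : V → ℝ) : Prop :=
  (∀ w, ζ w ∈ Set.Icc (0 : ℝ) 1) ∧
    ∀ u v, G.Adj u v →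
      1 ≤ ∑ w ∈ Finset.univ.filter (fun w => G.dist w u ≠ G.dist w v), ζ w

/-- The local fractional metric dimension of `G`: the minimum of `∑ v, ζ v` over all
local resolving functions `ζ` of `G`. -/
noncomputable def ldimf {V : Type*} [Fintype V] (G : SimpleGraph V) : ℝ :=
  sInf {s : ℝ | ∃ ζ : V → ℝ, IsLocalResolvingFunction G ζ ∧ s = ∑ v, ζ v}

/-- The Toeplitz graph `T_n⟨S⟩` (vertices `0, …, n-1` standing for `1, …, n`):
two distinct vertices are adjacent iff their absolute difference lies in `S`. -/
def toeplitzGraph (n : ℕ) (S : Set ℕ) : SimpleGraph (Fin n) where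
  Adj p q := p ≠ q ∧ Nat.dist (p : ℕ) (q : ℕ) ∈ S
  symm := ⟨fun p q ⟨h1, h2⟩ => ⟨h1.symm, by rwa [Nat.dist_comm]⟩⟩
  loopless := ⟨fun p ⟨h, _⟩ => h rfl⟩

section
variable (p : ℕ) (hp : p.Prime) (h3 : 3 < p)

lemma adj33 (a : ℕ) (h : a + 3 < 3 * p) :
    (toeplitzGraph (3*p) {3,p}).Adj ⟨a, by omega⟩ ⟨a + 3, h⟩ := by
  refine ⟨?_, ?_⟩
  · intro he
    have := Fin.mk.injEq (n := 3*p) a (by omega) (a+3) h ▸ he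
    simp [Fin.ext_iff] at he
  · left
    simp [Nat.dist]

lemma adjp (a : ℕ) (h : a + p < 3 * p) :
    (toeplitzGraph (3*p) {3,p}).Adj ⟨a, by omega⟩ ⟨a + p, h⟩ := by
  refine ⟨?_, ?_⟩
  · simp [Fin.ext_iff]; omega
  · right
    simp [Nat.dist]

lemma reach_add3 (k a : ℕ) (h : a + 3 * k < 3 * p) :
    (toeplitzGraph (3*p) {3,p}).Reachable ⟨a, by omega⟩ ⟨a + 3*k, h⟩ := by
  induction k with
  | zero => exact SimpleGraph.Reachable.refl _
  | succ k ih =>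
      have h' : a + 3*k < 3*p := by omega
      refine (ih h').trans ?_
      have := (adj33 p (a + 3*k) (by omega)).reachable
      convert this using 2 <;> omega

lemma reach_mod3 (a b : Fin (3*p)) (h : (a:ℕ) % 3 = (b:ℕ) % 3) :
    (toeplitzGraph (3*p) {3,p}).Reachable a b := by
  rcases le_total (a:ℕ) (b:ℕ) with hle | hle
  · obtain ⟨k, hk⟩ : ∃ k, (b:ℕ) = (a:ℕ) + 3 * k := ⟨((b:ℕ)-a)/3, by omega⟩
    have hb : (a:ℕ) + 3 * k < 3 * p := hk ▸ b.isLt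
    have := reach_add3 p k a hb
    convert this using 2 <;> simp [Fin.ext_iff, hk]
  · obtain ⟨k, hk⟩ : ∃ k, (a:ℕ) = (b:ℕ) + 3 * k := ⟨((a:ℕ)-b)/3, by omega⟩
    have ha : (b:ℕ) + 3 * k < 3 * p := hk ▸ a.isLt
    have := (reach_add3 p k b ha).symm
    convert this using 2 <;> simp [Fin.ext_iff, hk]

include hp h3 in
lemma pmod3 : p % 3 = 1 ∨ p % 3 = 2 := by
  have : ¬ (3 ∣ p) := by
    intro hd
    rcases (Nat.Prime.eq_one_or_self_of_dvd hp 3 hd) with h | h <;> omega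
  omega

include hp h3 in
lemma connected_aux (v : Fin (3*p)) :
    (toeplitzGraph (3*p) {3,p}).Reachable v ⟨0, by omega⟩ := by
  have hpm := pmod3 p hp h3
  have e1 : (toeplitzGraph (3*p) {3,p}).Adj ⟨0, by omega⟩ ⟨0 + p, by omega⟩ :=
    adjp p 0 (by omega)
  have e2 : (toeplitzGraph (3*p) {3,p}).Adj ⟨p, by omega⟩ ⟨p + p, by omega⟩ :=
    adjp p p (by omega)
  have r1 : (toeplitzGraph (3*p) {3,p}).Reachable ⟨p, by omega⟩ ⟨0, by omega⟩ := by
    have := e1.reachable.symm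
    convert this using 2
    omega
  have r2 : (toeplitzGraph (3*p) {3,p}).Reachable ⟨p + p, by omega⟩ ⟨0, by omega⟩ :=
    e2.reachable.symm.trans r1
  have hv3 : (v:ℕ) % 3 = 0 ∨ (v:ℕ) % 3 = p % 3 ∨ (v:ℕ) % 3 = (p + p) % 3 := by omega
  rcases hv3 with h | h | h
  · exact reach_mod3 p v ⟨0, by omega⟩ (by simpa using h)
  · exact (reach_mod3 p v ⟨p, by omega⟩ (by simpa using h)).trans r1
  · exact (reach_mod3 p v ⟨p + p, by omega⟩ (by simpa using h)).trans r2

include hp h3 in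
lemma walk_parity {u v : Fin (3*p)} (W : (toeplitzGraph (3*p) {3,p}).Walk u v) :
    W.length % 2 = ((u:ℕ) + (v:ℕ)) % 2 := by
  have hpodd : p % 2 = 1 := Nat.odd_iff.mp (hp.odd_of_ne_two (by omega))
  induction W with
  | nil => simp; omega
  | cons h W ih =>
      rename_i a b c
      have hd : Nat.dist (a:ℕ) (b:ℕ) = 3 ∨ Nat.dist (a:ℕ) (b:ℕ) = p := h.2
      have : ((a:ℕ) + (b:ℕ)) % 2 = 1 := by
        simp [Nat.dist] at hd
        omega
      simp only [SimpleGraph.Walk.length_cons]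
      omega

include hp h3 in
lemma dist_parity (w u : Fin (3*p)) :
    (toeplitzGraph (3*p) {3,p}).dist w u % 2 = ((w:ℕ) + (u:ℕ)) % 2 := by
  have hr : (toeplitzGraph (3*p) {3,p}).Reachable w u :=
    (connected_aux p hp h3 w).trans (connected_aux p hp h3 u).symm
  obtain ⟨W, hW⟩ := hr.exists_walk_length_eq_dist
  rw [← hW]
  exact walk_parity p hp h3 W
end

section
variable (p : ℕ) (hp : p.Prime) (h3 : 3 < p)

include hp h3 in
lemma adj_parity {u v : Fin (3*p)} (h : (toeplitzGraph (3*p) {3,p}).Adj u v) :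
    ((u:ℕ) + (v:ℕ)) % 2 = 1 := by
  have hpodd : p % 2 = 1 := Nat.odd_iff.mp (hp.odd_of_ne_two (by omega))
  have hd : Nat.dist (u:ℕ) (v:ℕ) = 3 ∨ Nat.dist (u:ℕ) (v:ℕ) = p := h.2
  simp [Nat.dist] at hd
  omega

include hp h3 in
theorem main' :
    sInf {s : ℝ | ∃ ζ : Fin (3*p) → ℝ, IsLocalResolvingFunction (toeplitzGraph (3 * p) {3, p}) ζ ∧ s = ∑ v, ζ v} = 1 := by
  set G' := toeplitzGraph (3 * p) {3, p} with hG
  set S := {s : ℝ | ∃ ζ : Fin (3*p) → ℝ, IsLocalResolvingFunction G' ζ ∧ s = ∑ v, ζ v} with hS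
  have hppos : (0:ℝ) < ((3*p : ℕ) : ℝ) := by
    have : 0 < 3*p := by omega
    exact_mod_cast this
  -- membership of 1
  have hmem : (1:ℝ) ∈ S := by
    refine ⟨fun _ => ((3*p : ℕ) : ℝ)⁻¹, ⟨?_, ?_⟩, ?_⟩
    · intro w
      constructor
      · positivity
      · rw [inv_le_one_iff₀]
        right
        exact_mod_cast Nat.one_le_iff_ne_zero.mpr (by omega)
    · intro u v huv
      have hfilter : Finset.univ.filter (fun w => G'.dist w u ≠ G'.dist w v) = Finset.univ := by
        apply Finset.filter_true_of_mem
        intro w _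
        have h1 := dist_parity p hp h3 w u
        have h2 := dist_parity p hp h3 w v
        rw [← hG] at h1 h2
        have h0 := adj_parity p hp h3 huv
        intro he
        rw [he] at h1
        omega
      rw [hfilter, Finset.sum_const, Finset.card_univ, Fintype.card_fin]
      rw [nsmul_eq_mul]
      rw [mul_inv_cancel₀ (ne_of_gt hppos)]
    · rw [Finset.sum_const, Finset.card_univ, Fintype.card_fin, nsmul_eq_mul,
        mul_inv_cancel₀ (ne_of_gt hppos)]
  -- lower bound
  have hlb : ∀ s ∈ S, (1:ℝ) ≤ s := by
    rintro s ⟨ζ, ⟨hIcc, hres⟩, rfl⟩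
    have hedge : G'.Adj ⟨0, by omega⟩ ⟨0 + 3, by omega⟩ := adj33 p 0 (by omega)
    refine le_trans (hres _ _ hedge) ?_
    apply Finset.sum_le_sum_of_subset_of_nonneg (Finset.filter_subset _ _)
    intro i _ _
    exact (hIcc i).1
  exact le_antisymm (csInf_le ⟨1, hlb⟩ hmem) (le_csInf ⟨1, hmem⟩ hlb)
end

/-- For every prime `p > 3`, `ldimf(T_{3p}⟨{3, p}⟩) = 1`. -/
theorem ldimf_toeplitz_three_p (p : ℕ) (hp : p.Prime) (h3 : 3 < p) :
    ldimf (toeplitzGraph (3 * p) {3, p}) = 1 := by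
  rw [ldimf]
  exact main' p hp h3
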